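/- Let h, g ∈ hS_* satisfy ‖P(g) − P(h)‖_∞ ≤ (1/2) · max(‖P(h)‖_∞, ‖P(g)‖_∞). Then for all p, q ∈ [1, ∞]: d_p(CL(h), CL(g)) ≤ 7 (KS)^{1/p} · min(‖P(h)‖_∞^{1/K − 1}, ‖P(g)‖_∞^{1/K − 1}) · ‖P(h) − P(g)‖_q. -/

import Mathlib

open scoped BigOperators ENNReal
open Finset

/-- Parameters of the network: `K` vectors in `ℝ^S`. -/
abbrev Params (K S : ℕ) := Fin K → Fin S → ℝ

/-- Order-`K` tensors with all sides of size `S`. -/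
abbrev Tensor (K S : ℕ) := (Fin K → Fin S) → ℝ

/-- The Segre map: `P(h)_{i_1,…,i_K} = h_{1,i_1} ⋯ h_{K,i_K}`. -/
noncomputable def Segre {K S : ℕ} (h : Params K S) : Tensor K S :=
  fun i => ∏ k, h k (i k)

/-- Parameters with all components nonzero. -/
def hSstar (K S : ℕ) : Set (Params K S) := {h | ∀ k, h k ≠ 0}

/-- The rescaling equivalence class of `h` (product of scales equal to `1`). -/
def CL {K S : ℕ} (h : Params K S) : Set (Params K S) :=
  {g | ∃ lam : Fin K → ℝ, (∏ k, lam k) = 1 ∧ ∀ k, g k = lam k • h k}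

/-- Sup norm on `ℝ^S`. -/
noncomputable def supnorm {S : ℕ} (x : Fin S → ℝ) : ℝ := ⨆ i, |x i|

/-- Parameters in `hSstar` whose components all have the same sup norm. -/
def hSdiag (K S : ℕ) : Set (Params K S) :=
  hSstar K S ∩ {h | ∀ k k' : Fin K, supnorm (h k) = supnorm (h k')}

/-- Entrywise `ℓ^p` norm, `p ∈ [1,∞]`. -/
noncomputable def pnorm (p : ℝ≥0∞) {ι : Type*} [Fintype ι] (x : ι → ℝ) : ℝ :=
  if p = ∞ then ⨆ i, |x i| else (∑ i, |x i| ^ p.toReal) ^ (1 / p.toReal)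

/-- Flatten parameters into a vector of length `K·S`. -/
def flat {K S : ℕ} (h : Params K S) : Fin K × Fin S → ℝ := fun ki => h ki.1 ki.2

/-- The distance `d_p` between rescaling classes, via representatives in `hSdiag`. -/
noncomputable def dDist {K S : ℕ} (p : ℝ≥0∞) (h g : Params K S) : ℝ :=
  sInf ((fun pr : Params K S × Params K S => pnorm p (flat pr.1 - flat pr.2)) ''
    {pr | pr.1 ∈ CL h ∩ hSdiag K S ∧ pr.2 ∈ CL g ∩ hSdiag K S})

section sup
variable {ι : Type*} [Fintype ι] [Nonempty ι] (x : ι → ℝ)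

omit [Nonempty ι] in
lemma abs_le_sup (i : ι) : |x i| ≤ ⨆ j, |x j| :=
  le_ciSup (Set.Finite.bddAbove (Set.finite_range fun j => |x j|)) i

lemma exists_sup_eq : ∃ i, (⨆ j, |x j|) = |x i| := by
  obtain ⟨i, hi⟩ := Finite.exists_max (fun j => |x j|)
  exact ⟨i, le_antisymm (ciSup_le hi) (abs_le_sup x i)⟩
omit [Nonempty ι] in
lemma pnorm_top_eq : pnorm ⊤ x = ⨆ j, |x j| := by simp [pnorm]

omit [Nonempty ι] in
lemma pnorm_nonneg (p : ℝ≥0∞) : 0 ≤ pnorm p x := by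
  unfold pnorm
  split
  · exact Real.iSup_nonneg fun i => abs_nonneg _
  · positivity

lemma toReal_one_le {q : ℝ≥0∞} (hq : 1 ≤ q) (hqt : q ≠ ⊤) : 1 ≤ q.toReal := by
  have := ENNReal.toReal_mono hqt hq
  simpa using this

/-- sup norm ≤ q-norm for q ≥ 1 -/
lemma pnorm_top_le (q : ℝ≥0∞) (hq : 1 ≤ q) : pnorm ⊤ x ≤ pnorm q x := by
  by_cases hqt : q = ⊤
  · simp [hqt]
  · rw [pnorm_top_eq]
    have hq1 : 1 ≤ q.toReal := toReal_one_le hq hqt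
    have hq0 : 0 < q.toReal := lt_of_lt_of_le one_pos hq1
    rw [pnorm, if_neg hqt]
    refine ciSup_le fun i => ?_
    have h1 : |x i| ^ q.toReal ≤ ∑ j, |x j| ^ q.toReal := by
      refine Finset.single_le_sum (f := fun j => |x j| ^ q.toReal) (fun j _ => ?_) (mem_univ i)
      positivity
    calc |x i| = (|x i| ^ q.toReal) ^ (1 / q.toReal) := by
          rw [← Real.rpow_mul (abs_nonneg _), mul_one_div, div_self hq0.ne', Real.rpow_one]
      _ ≤ (∑ j, |x j| ^ q.toReal) ^ (1 / q.toReal) := by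
          apply Real.rpow_le_rpow (by positivity) h1 (by positivity)

/-- p-norm ≤ card^{1/p} * bound on coords -/
lemma pnorm_le_card_mul (p : ℝ≥0∞) (hp : 1 ≤ p) {b : ℝ} (hb : 0 ≤ b)
    (hx : ∀ i, |x i| ≤ b) :
    pnorm p x ≤ ((Fintype.card ι : ℝ)) ^ ((1:ℝ) / p.toReal) * b := by
  by_cases hpt : p = ⊤
  · simp only [hpt, ENNReal.toReal_top, div_zero, Real.rpow_zero, one_mul, pnorm_top_eq]
    exact ciSup_le hx
  · have hp1 : 1 ≤ p.toReal := toReal_one_le hp hpt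
    have hp0 : 0 < p.toReal := lt_of_lt_of_le one_pos hp1
    rw [pnorm, if_neg hpt]
    have h1 : ∑ i, |x i| ^ p.toReal ≤ (Fintype.card ι : ℝ) * b ^ p.toReal := by
      calc ∑ i, |x i| ^ p.toReal ≤ ∑ _i : ι, b ^ p.toReal :=
            Finset.sum_le_sum fun i _ => Real.rpow_le_rpow (abs_nonneg _) (hx i) hp0.le
        _ = (Fintype.card ι : ℝ) * b ^ p.toReal := by
            rw [Finset.sum_const, card_univ, nsmul_eq_mul]
    calc (∑ i, |x i| ^ p.toReal) ^ (1 / p.toReal)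
        ≤ ((Fintype.card ι : ℝ) * b ^ p.toReal) ^ (1 / p.toReal) :=
          Real.rpow_le_rpow (by positivity) h1 (by positivity)
      _ = (Fintype.card ι : ℝ) ^ ((1:ℝ) / p.toReal) * b := by
          rw [Real.mul_rpow (by positivity) (by positivity),
            ← Real.rpow_mul hb]
          rw [mul_one_div, div_self hp0.ne', Real.rpow_one]
end sup

section supnormlemmas
variable {S : ℕ}

lemma supnorm_nonneg (x : Fin S → ℝ) : 0 ≤ supnorm x :=
  Real.iSup_nonneg fun i => abs_nonneg _

lemma abs_le_supnorm (x : Fin S → ℝ) (i : Fin S) : |x i| ≤ supnorm x :=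
  abs_le_sup x i

lemma supnorm_pos {x : Fin S → ℝ} (hx : x ≠ 0) : 0 < supnorm x := by
  obtain ⟨i, hi⟩ := Function.ne_iff.mp hx
  exact lt_of_lt_of_le (abs_pos.mpr hi) (abs_le_supnorm x i)

lemma supnorm_smul (hS : 0 < S) (c : ℝ) (x : Fin S → ℝ) :
    supnorm (c • x) = |c| * supnorm x := by
  haveI : Nonempty (Fin S) := Fin.pos_iff_nonempty.mp hS
  unfold supnorm
  apply le_antisymm
  · refine ciSup_le fun i => ?_
    simp only [Pi.smul_apply, smul_eq_mul, abs_mul]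
    exact mul_le_mul_of_nonneg_left (abs_le_sup x i) (abs_nonneg c)
  · obtain ⟨i, hi⟩ := exists_sup_eq x
    rw [hi, ← abs_mul]
    exact abs_le_sup (c • x) i
end supnormlemmas

section segre
variable {K S : ℕ}

lemma segre_smul (lam : Fin K → ℝ) (h : Params K S) :
    Segre (fun k => lam k • h k) = (∏ k, lam k) • Segre h := by
  funext i
  simp [Segre, Finset.prod_mul_distrib]

lemma pnorm_top_segre (hS : 0 < S) (h : Params K S) :
    pnorm ⊤ (Segre h) = ∏ k, supnorm (h k) := by
  haveI : Nonempty (Fin S) := Fin.pos_iff_nonempty.mp hS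
  simp only [pnorm, if_pos rfl]
  apply le_antisymm
  · refine ciSup_le fun i => ?_
    rw [Segre, Finset.abs_prod]
    exact Finset.prod_le_prod (fun k _ => abs_nonneg _)
      (fun k _ => abs_le_supnorm (h k) (i k))
  · choose j hj using fun k => exists_sup_eq (h k)
    calc ∏ k, supnorm (h k) = ∏ k, |h k (j k)| := by
          exact Finset.prod_congr rfl fun k _ => hj k
      _ = |Segre h j| := by rw [Segre, Finset.abs_prod]
      _ ≤ ⨆ i, |Segre h i| := abs_le_sup _ j

lemma pnorm_top_segre_pos (hS : 0 < S) {h : Params K S} (hh : h ∈ hSstar K S) :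
    0 < pnorm ⊤ (Segre h) := by
  rw [pnorm_top_segre hS]
  exact Finset.prod_pos fun k _ => supnorm_pos (hh k)

/-- existence of a balanced representative -/
lemma exists_balanced (hK : 1 ≤ K) (hS : 0 < S) {h : Params K S} (hh : h ∈ hSstar K S) :
    ∃ h' : Params K S, h' ∈ CL h ∩ hSdiag K S ∧ Segre h' = Segre h ∧
      ∀ k, supnorm (h' k) = (pnorm ⊤ (Segre h)) ^ ((K : ℝ)⁻¹) := by
  set M := pnorm ⊤ (Segre h) with hM
  have hMpos : 0 < M := pnorm_top_segre_pos hS hh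
  set μ := M ^ ((K : ℝ)⁻¹) with hμ
  have hμpos : 0 < μ := Real.rpow_pos_of_pos hMpos _
  have hKne : (K : ℝ) ≠ 0 := Nat.cast_ne_zero.mpr (by omega)
  have hμK : μ ^ K = M := by
    rw [hμ, ← Real.rpow_natCast (M ^ ((K:ℝ)⁻¹)) K, ← Real.rpow_mul hMpos.le,
      inv_mul_cancel₀ hKne, Real.rpow_one]
  have hsn : ∀ k, 0 < supnorm (h k) := fun k => supnorm_pos (hh k)
  refine ⟨fun k => (μ / supnorm (h k)) • h k, ⟨⟨fun k => μ / supnorm (h k), ?_, fun k => rfl⟩, ?_, ?_⟩, ?_, ?_⟩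
  · rw [Finset.prod_div_distrib, Finset.prod_const, ← pnorm_top_segre hS, ← hM,
      Finset.card_univ, Fintype.card_fin, hμK]
    exact div_self hMpos.ne'
  · intro k
    exact smul_ne_zero (div_pos hμpos (hsn k)).ne' (hh k)
  · intro k k'
    have e : ∀ k, supnorm ((μ / supnorm (h k)) • h k) = μ := by
      intro k
      rw [supnorm_smul hS, abs_of_pos (div_pos hμpos (hsn k)), div_mul_cancel₀ _ (hsn k).ne']
    rw [e, e]
  · rw [show (fun k => (μ / supnorm (h k)) • h k) = fun k => (fun k => μ / supnorm (h k)) k • h k from rfl,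
      segre_smul]
    rw [Finset.prod_div_distrib, Finset.prod_const, ← pnorm_top_segre hS, ← hM,
      Finset.card_univ, Fintype.card_fin, hμK, div_self hMpos.ne', one_smul]
  · intro k
    rw [supnorm_smul hS, abs_of_pos (div_pos hμpos (hsn k)), div_mul_cancel₀ _ (hsn k).ne']
end segre

section key
variable {K S : ℕ}

lemma pnorm_sub_comm {ι : Type*} [Fintype ι] (p : ℝ≥0∞) (x y : ι → ℝ) :
    pnorm p (x - y) = pnorm p (y - x) := by
  unfold pnorm
  simp only [Pi.sub_apply, abs_sub_comm]

set_option maxHeartbeats 2000000 in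
/-- Key estimate: coordinatewise bound for suitable representatives,
assuming `‖Segre g‖ ≤ ‖Segre h‖`. -/
lemma key (hK : 1 ≤ K) (hS : 0 < S) {h g : Params K S}
    (hh : h ∈ hSstar K S) (hg : g ∈ hSstar K S)
    (hle : pnorm ⊤ (Segre g) ≤ pnorm ⊤ (Segre h))
    (hclose : pnorm ⊤ (Segre h - Segre g) ≤ (1/2) * pnorm ⊤ (Segre h)) :
    ∃ h' g', h' ∈ CL h ∩ hSdiag K S ∧ g' ∈ CL g ∩ hSdiag K S ∧
      ∀ k i, |h' k i - g' k i| ≤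
        3 * (pnorm ⊤ (Segre h)) ^ ((1:ℝ)/(K:ℝ) - 1) * pnorm ⊤ (Segre h - Segre g) := by
  haveI : Nonempty (Fin S) := Fin.pos_iff_nonempty.mp hS
  haveI : Nonempty (Fin K) := Fin.pos_iff_nonempty.mp (by omega)
  obtain ⟨h', hh', hSh', hsnh'⟩ := exists_balanced hK hS hh
  obtain ⟨g', hg', hSg', hsng'⟩ := exists_balanced hK hS hg
  set M := pnorm ⊤ (Segre h) with hM
  set N := pnorm ⊤ (Segre g) with hN
  set μ := M ^ ((K : ℝ)⁻¹) with hμ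
  set ν := N ^ ((K : ℝ)⁻¹) with hν
  have hMpos : 0 < M := pnorm_top_segre_pos hS hh
  have hNpos : 0 < N := pnorm_top_segre_pos hS hg
  have hμpos : 0 < μ := Real.rpow_pos_of_pos hMpos _
  have hνpos : 0 < ν := Real.rpow_pos_of_pos hNpos _
  have hνμ : ν ≤ μ := Real.rpow_le_rpow hNpos.le hle (by positivity)
  have hKne : (K : ℝ) ≠ 0 := Nat.cast_ne_zero.mpr (by omega)
  have hμK : μ ^ K = M := by
    rw [hμ, ← Real.rpow_natCast (M ^ ((K:ℝ)⁻¹)) K, ← Real.rpow_mul hMpos.le,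
      inv_mul_cancel₀ hKne, Real.rpow_one]
  set δ := pnorm ⊤ (Segre h - Segre g) with hδdef
  have hδ0 : 0 ≤ δ := by
    rw [hδdef, pnorm]
    exact if_pos rfl ▸ Real.iSup_nonneg fun i => abs_nonneg _
  have hδM : δ ≤ M / 2 := by linarith
  -- entrywise bound on tensor difference
  have hent : ∀ i : Fin K → Fin S, |Segre h' i - Segre g' i| ≤ δ := by
    intro i
    rw [hSh', hSg', hδdef, pnorm, if_pos rfl]
    exact abs_le_sup (Segre h - Segre g) i
  -- maximizing indices for h'
  choose j hj using fun k => exists_sup_eq (h' k)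
  set a : Fin K → ℝ := fun k => h' k (j k) with ha
  set c : Fin K → ℝ := fun k => g' k (j k) with hc
  have haμ : ∀ k, |a k| = μ := fun k => by
    rw [ha]; simp only; rw [← hj k]; exact hsnh' k
  have hcν : ∀ k, |c k| ≤ ν := fun k => (hsng' k) ▸ abs_le_supnorm (g' k) (j k)
  have hPJ : Segre h' j = ∏ k, a k := rfl
  have hQJ : Segre g' j = ∏ k, c k := rfl
  have hPJabs : |∏ k, a k| = M := by
    rw [Finset.abs_prod]
    rw [Finset.prod_congr rfl fun k _ => haμ k, Finset.prod_const, Finset.card_univ,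
      Fintype.card_fin, hμK]
  have hJdiff : |∏ k, a k - ∏ k, c k| ≤ δ := by
    have := hent j; rwa [hPJ, hQJ] at this
  have hQJabs : M - δ ≤ |∏ k, c k| := by
    have := abs_sub_abs_le_abs_sub (∏ k, a k) (∏ k, c k)
    rw [hPJabs] at this; linarith
  have hQJne : (∏ k, c k) ≠ 0 := by
    intro h0; rw [h0, abs_zero] at hQJabs; linarith
  have hcne : ∀ k, c k ≠ 0 := by
    intro k hk
    exact hQJne (Finset.prod_eq_zero (mem_univ k) hk)
  have hane : ∀ k, a k ≠ 0 := fun k hk => by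
    have h2 := haμ k; rw [hk, abs_zero] at h2; exact hμpos.ne h2
  -- same sign of the two full products
  have hprodpos : 0 < (∏ k, a k) * (∏ k, c k) := by
    rcases (abs_eq hMpos.le).mp hPJabs with hcase | hcase
    · have h1 := (abs_le.mp hJdiff).1
      have h2 := (abs_le.mp hJdiff).2
      rw [hcase] at h1 h2 ⊢
      nlinarith
    · have h1 := (abs_le.mp hJdiff).1
      have h2 := (abs_le.mp hJdiff).2
      rw [hcase] at h1 h2 ⊢
      nlinarith
  -- sign flips
  set ε : Fin K → ℝ := fun k => if 0 < a k * c k then 1 else -1 with hε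
  have hε1 : ∀ k, ε k = 1 ∨ ε k = -1 := fun k => by
    by_cases h0 : 0 < a k * c k <;> simp [hε, h0]
  have hεabs : ∀ k, |ε k| = 1 := fun k => by rcases hε1 k with h1 | h1 <;> simp [h1]
  have hεpos : ∀ k, 0 < ε k * (a k * c k) := by
    intro k
    by_cases h0 : 0 < a k * c k
    · simpa [hε, h0] using h0
    · have hne : a k * c k ≠ 0 := mul_ne_zero (hane k) (hcne k)
      have : a k * c k < 0 := lt_of_le_of_ne (not_lt.mp h0) hne
      simp only [hε, if_neg h0]
      nlinarith
  have hεprod : ∏ k, ε k = 1 := by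
    have hpp : 0 < ∏ k, ε k * (a k * c k) := Finset.prod_pos fun k _ => hεpos k
    rw [Finset.prod_mul_distrib, Finset.prod_mul_distrib] at hpp
    have habs : |∏ k, ε k| = 1 := by
      rw [Finset.abs_prod, Finset.prod_congr rfl fun k _ => hεabs k, Finset.prod_const,
        one_pow]
    rcases (abs_eq (by norm_num : (0:ℝ) ≤ 1)).mp habs with h1 | h1
    · exact h1
    · exfalso; rw [h1] at hpp; nlinarith
  -- flipped representative of g
  set g'' : Params K S := fun k => ε k • g' k with hg''
  have hg''mem : g'' ∈ CL g ∩ hSdiag K S := by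
    obtain ⟨⟨lam, hlam1, hlam2⟩, hg'star, hg'diag⟩ := hg'
    refine ⟨⟨fun k => ε k * lam k, ?_, fun k => ?_⟩, fun k => ?_, fun k k' => ?_⟩
    · rw [Finset.prod_mul_distrib, hεprod, hlam1, one_mul]
    · show ε k • g' k = (ε k * lam k) • g k
      rw [hlam2 k, mul_smul]
    · exact smul_ne_zero (fun h0 => by rcases hε1 k with h1|h1 <;> rw [h1] at h0 <;> norm_num at h0) (hg'star k)
    · rw [hg'', supnorm_smul hS, supnorm_smul hS, hεabs, hεabs, one_mul, one_mul,
        hsng' k, hsng' k']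
  have hsng'' : ∀ k, supnorm (g'' k) = ν := by
    intro k; rw [hg'', supnorm_smul hS, hεabs, one_mul, hsng' k]
  set c' : Fin K → ℝ := fun k => ε k * c k with hc'
  have hg''j : ∀ k, g'' k (j k) = c' k := fun k => rfl
  have hac' : ∀ k, 0 < a k * c' k := by
    intro k; have := hεpos k; rw [hc']; ring_nf; ring_nf at this; linarith
  have hc'abs : ∀ k, |c' k| = |c k| := fun k => by
    rw [hc', abs_mul, hεabs, one_mul]
  have hSg'' : Segre g'' = Segre g := by
    rw [hg'', show (fun k => ε k • g' k) = fun k => ε k • g' k from rfl, segre_smul, hεprod,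
      one_smul, hSg']
  -- the coordinatewise estimate
  refine ⟨h', g'', hh', hg''mem, fun k i => ?_⟩
  set A : ℝ := ∏ l ∈ univ.erase k, a l with hA
  set C : ℝ := ∏ l ∈ univ.erase k, c' l with hC
  have hcard : (univ.erase k).card = K - 1 := by
    rw [Finset.card_erase_of_mem (mem_univ k), Finset.card_univ, Fintype.card_fin]
  have hAabs : |A| = μ ^ (K - 1) := by
    rw [hA, Finset.abs_prod, Finset.prod_congr rfl fun l _ => haμ l, Finset.prod_const, hcard]
  have hCabs_le : |C| ≤ μ ^ (K - 1) := by
    rw [hC, Finset.abs_prod, ← hcard]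
    refine le_trans (Finset.prod_le_prod (fun l _ => abs_nonneg _)
      (fun l _ => (hc'abs l ▸ hcν l : |c' l| ≤ ν))) ?_
    rw [Finset.prod_const]
    exact pow_le_pow_left₀ hνpos.le hνμ _
  have hc'prod : (∏ l, c' l) = ∏ l, c l := by
    have : (∏ l, c' l) = (∏ l, ε l) * ∏ l, c l := by
      rw [← Finset.prod_mul_distrib]
    rw [this, hεprod, one_mul]
  have hCprod : |C| * |c' k| = |∏ l, c l| := by
    rw [← abs_mul, mul_comm, hC, Finset.mul_prod_erase univ c' (mem_univ k), hc'prod]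
  have hCabs_ge : (M - δ) / ν ≤ |C| := by
    rw [div_le_iff₀ hνpos]
    calc M - δ ≤ |∏ l, c l| := hQJabs
      _ = |C| * |c' k| := hCprod.symm
      _ ≤ |C| * ν := mul_le_mul_of_nonneg_left (hc'abs k ▸ hcν k) (abs_nonneg _)
  have hACpos : 0 < A * C := by
    have : 0 < ∏ l ∈ univ.erase k, a l * c' l := Finset.prod_pos fun l _ => hac' l
    rwa [Finset.prod_mul_distrib] at this
  have hAne : A ≠ 0 := fun h0 => by simp [h0] at hACpos
  have hCA : |C - A| ≤ δ / ν := by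
    have hsame : |C - A| = |(|C|) - (|A|)| := by
      rcases mul_pos_iff.mp hACpos with ⟨hA0, hC0⟩ | ⟨hA0, hC0⟩
      · rw [abs_of_pos hA0, abs_of_pos hC0]
      · rw [abs_of_neg hA0, abs_of_neg hC0, ← abs_neg]; ring_nf
    rw [hsame, hAabs]
    have h1 : |C| ≤ μ ^ (K-1) := hCabs_le
    have h2 : (M - δ)/ν ≤ |C| := hCabs_ge
    have h3 : ν * μ ^ (K-1) ≤ M := by
      calc ν * μ ^ (K-1) ≤ μ * μ ^ (K-1) := by
            exact mul_le_mul_of_nonneg_right hνμ (by positivity)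
        _ = μ ^ (K-1+1) := by ring
        _ = M := by rw [show K-1+1 = K from by omega, hμK]
    rw [abs_le]
    constructor
    · have h4 : μ^(K-1) ≤ (M - δ)/ν + δ/ν := by
        rw [← add_div, le_div_iff₀ hνpos]
        linarith
      linarith
    · have : μ^(K-1) - (M-δ)/ν ≤ δ/ν := by
        rw [sub_le_iff_le_add, ← add_div, le_div_iff₀ hνpos]
        linarith
      linarith
  -- index update and entry formulas
  have hup : ∀ l : Fin K, l ≠ k → Function.update j k i l = j l :=
    fun l hl => Function.update_of_ne hl i j
  have hPh : Segre h' (Function.update j k i) = h' k i * A := by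
    calc Segre h' (Function.update j k i)
        = ∏ l, h' l (Function.update j k i l) := rfl
      _ = h' k (Function.update j k i k) *
          ∏ l ∈ univ.erase k, h' l (Function.update j k i l) :=
          (Finset.mul_prod_erase univ (fun l => h' l (Function.update j k i l))
            (mem_univ k)).symm
      _ = h' k i * A := by
          rw [Function.update_self, hA]
          congr 1
          refine Finset.prod_congr rfl fun l hl => ?_
          rw [hup l (Finset.ne_of_mem_erase hl), ha]
  have hQg : Segre g'' (Function.update j k i) = g'' k i * C := by
    calc Segre g'' (Function.update j k i)
        = ∏ l, g'' l (Function.update j k i l) := rfl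
      _ = g'' k (Function.update j k i k) *
          ∏ l ∈ univ.erase k, g'' l (Function.update j k i l) :=
          (Finset.mul_prod_erase univ (fun l => g'' l (Function.update j k i l))
            (mem_univ k)).symm
      _ = g'' k i * C := by
          rw [Function.update_self, hC]
          congr 1
          refine Finset.prod_congr rfl fun l hl => ?_
          rw [hup l (Finset.ne_of_mem_erase hl)]
          exact hg''j l
  have hentJ : |h' k i * A - g'' k i * C| ≤ δ := by
    rw [← hPh, ← hQg]
    have h5 := hent (Function.update j k i)
    rwa [hSg', ← hSg''] at h5
  have hgbound : |g'' k i| ≤ ν := (hsng'' k) ▸ abs_le_supnorm (g'' k) i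
  -- final computation
  have hdecomp : h' k i - g'' k i =
      (h' k i * A - g'' k i * C) / A + g'' k i * (C - A) / A := by
    field_simp
    ring
  have hμpow : (0:ℝ) < μ ^ (K-1) := by positivity
  have hbound : |h' k i - g'' k i| ≤ 2 * δ / μ ^ (K-1) := by
    rw [hdecomp]
    calc |(h' k i * A - g'' k i * C) / A + g'' k i * (C - A) / A|
        ≤ |(h' k i * A - g'' k i * C) / A| + |g'' k i * (C - A) / A| := abs_add_le _ _
      _ = |h' k i * A - g'' k i * C| / |A| + |g'' k i| * |C - A| / |A| := by
          rw [abs_div, abs_div, abs_mul]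
      _ ≤ δ / μ^(K-1) + ν * (δ/ν) / μ^(K-1) := by
          rw [hAabs]
          have t2 : |g'' k i| * |C - A| ≤ ν * (δ/ν) :=
            mul_le_mul hgbound hCA (abs_nonneg _) hνpos.le
          exact add_le_add ((div_le_div_iff_of_pos_right hμpow).mpr hentJ)
            ((div_le_div_iff_of_pos_right hμpow).mpr t2)
      _ = 2 * δ / μ^(K-1) := by
          have t3 : ν * (δ/ν) = δ := by field_simp
          rw [t3]
          ring
  refine le_trans hbound ?_
  have hMe : M ^ ((1:ℝ)/(K:ℝ) - 1) = (μ ^ (K-1))⁻¹ := by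
    have h1 : μ ^ (K-1) = M / μ := by
      rw [eq_div_iff hμpos.ne', ← pow_succ, show K-1+1 = K from by omega, hμK]
    rw [h1, inv_div, Real.rpow_sub hMpos, Real.rpow_one, one_div, hμ]
  rw [hMe, div_le_iff₀ hμpow]
  have t4 : 3 * (μ ^ (K - 1))⁻¹ * δ * μ ^ (K - 1) =
      3 * δ * ((μ ^ (K - 1))⁻¹ * μ ^ (K - 1)) := by ring
  rw [t4, inv_mul_cancel₀ hμpow.ne', mul_one]
  linarith
end key

lemma dDist_le {K S : ℕ} (hK : 1 ≤ K) (hS : 0 < S) (p : ℝ≥0∞) (hp : 1 ≤ p)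
    {h g h' g' : Params K S} (hh' : h' ∈ CL h ∩ hSdiag K S) (hg' : g' ∈ CL g ∩ hSdiag K S)
    {b : ℝ} (hb : 0 ≤ b) (hbd : ∀ k i, |h' k i - g' k i| ≤ b) :
    dDist p h g ≤ ((K * S : ℕ) : ℝ) ^ ((1:ℝ)/p.toReal) * b := by
  haveI : Nonempty (Fin S) := Fin.pos_iff_nonempty.mp hS
  haveI : Nonempty (Fin K) := Fin.pos_iff_nonempty.mp (by omega)
  have hmem : pnorm p (flat h' - flat g') ∈
      ((fun pr : Params K S × Params K S => pnorm p (flat pr.1 - flat pr.2)) ''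
        {pr | pr.1 ∈ CL h ∩ hSdiag K S ∧ pr.2 ∈ CL g ∩ hSdiag K S}) :=
    ⟨(h', g'), ⟨hh', hg'⟩, rfl⟩
  have hbdd : BddBelow ((fun pr : Params K S × Params K S => pnorm p (flat pr.1 - flat pr.2)) ''
      {pr | pr.1 ∈ CL h ∩ hSdiag K S ∧ pr.2 ∈ CL g ∩ hSdiag K S}) := by
    refine ⟨0, fun y hy => ?_⟩
    obtain ⟨pr, _, hy⟩ := hy
    exact hy ▸ pnorm_nonneg _ _
  refine le_trans (csInf_le hbdd hmem) ?_
  have hcm := pnorm_le_card_mul (flat h' - flat g') p hp hb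
    (fun ki => hbd ki.1 ki.2)
  rwa [Fintype.card_prod, Fintype.card_fin, Fintype.card_fin] at hcm


/-- stable recovery of the class `CL(h)` from the Segre tensor `P(h)`. -/
theorem segre_stable_identifiability {K S : ℕ} (hK : 1 ≤ K) (hS : 2 ≤ S)
    (h g : Params K S) (hh : h ∈ hSstar K S) (hg : g ∈ hSstar K S)
    (hclose : pnorm ⊤ (Segre g - Segre h) ≤
      (1 / 2) * max (pnorm ⊤ (Segre h)) (pnorm ⊤ (Segre g))) :
    ∀ p q : ℝ≥0∞, 1 ≤ p → 1 ≤ q →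
      dDist p h g ≤
        7 * ((K * S : ℕ) : ℝ) ^ ((1 : ℝ) / p.toReal) *
          min ((pnorm ⊤ (Segre h)) ^ ((1 : ℝ) / (K : ℝ) - 1))
              ((pnorm ⊤ (Segre g)) ^ ((1 : ℝ) / (K : ℝ) - 1)) *
          pnorm q (Segre h - Segre g) := by
  intro p q hp hq
  haveI : Nonempty (Fin S) := Fin.pos_iff_nonempty.mp (by omega)
  haveI : Nonempty (Fin K) := Fin.pos_iff_nonempty.mp (by omega)
  have hS0 : 0 < S := by omega
  set Mh := pnorm ⊤ (Segre h) with hMh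
  set Mg := pnorm ⊤ (Segre g) with hMg
  have hMhpos : 0 < Mh := pnorm_top_segre_pos hS0 hh
  have hMgpos : 0 < Mg := pnorm_top_segre_pos hS0 hg
  set e : ℝ := (1:ℝ)/(K:ℝ) - 1 with he
  have hepos : e ≤ 0 := by
    rw [he, sub_nonpos]
    rw [div_le_one (by exact_mod_cast Nat.pos_of_ne_zero (by omega))]
    exact_mod_cast hK
  set δ := pnorm ⊤ (Segre h - Segre g) with hδ
  have hδ0 : 0 ≤ δ := by
    rw [hδ, pnorm, if_pos rfl]
    exact Real.iSup_nonneg fun i => abs_nonneg _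
  have hδq : δ ≤ pnorm q (Segre h - Segre g) := pnorm_top_le _ q hq
  have hpq0 : 0 ≤ pnorm q (Segre h - Segre g) := pnorm_nonneg _ _
  have hmin0 : 0 ≤ min (Mh ^ e) (Mg ^ e) :=
    le_min (Real.rpow_nonneg hMhpos.le _) (Real.rpow_nonneg hMgpos.le _)
  have hKS0 : (0:ℝ) ≤ ((K * S : ℕ) : ℝ) ^ ((1:ℝ)/p.toReal) :=
    Real.rpow_nonneg (Nat.cast_nonneg _) _
  rcases le_total Mg Mh with hc | hc
  · -- ‖Segre g‖ ≤ ‖Segre h‖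
    have hclose' : pnorm ⊤ (Segre h - Segre g) ≤ (1/2) * Mh := by
      rw [pnorm_sub_comm]
      rw [max_eq_left hc] at hclose
      exact hclose
    obtain ⟨h', g', hh', hg', hbd⟩ := key hK hS0 hh hg hc hclose'
    have hb0 : 0 ≤ 3 * Mh ^ e * δ := by
      have := Real.rpow_nonneg hMhpos.le e
      positivity
    have h1 := dDist_le hK hS0 p hp hh' hg' hb0 (fun k i => hbd k i)
    refine le_trans h1 ?_
    have hinner : 3 * Mh ^ e * δ ≤ 7 * min (Mh ^ e) (Mg ^ e) * pnorm q (Segre h - Segre g) := by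
      have hm : Mh ^ e ≤ min (Mh ^ e) (Mg ^ e) :=
        le_min (le_refl _) (Real.rpow_le_rpow_of_nonpos hMgpos hc hepos)
      have s1 : 3 * Mh ^ e ≤ 7 * min (Mh ^ e) (Mg ^ e) :=
        mul_le_mul (by norm_num) hm (Real.rpow_nonneg hMhpos.le _) (by norm_num)
      exact mul_le_mul s1 hδq hδ0 (by positivity)
    calc ((K * S : ℕ) : ℝ) ^ ((1:ℝ)/p.toReal) * (3 * Mh ^ e * δ)
        ≤ ((K * S : ℕ) : ℝ) ^ ((1:ℝ)/p.toReal) *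
            (7 * min (Mh ^ e) (Mg ^ e) * pnorm q (Segre h - Segre g)) :=
          mul_le_mul_of_nonneg_left hinner hKS0
      _ = 7 * ((K * S : ℕ) : ℝ) ^ ((1:ℝ)/p.toReal) * min (Mh ^ e) (Mg ^ e) *
            pnorm q (Segre h - Segre g) := by ring
  · -- ‖Segre h‖ ≤ ‖Segre g‖
    have hclose' : pnorm ⊤ (Segre g - Segre h) ≤ (1/2) * Mg := by
      rw [max_eq_right hc] at hclose
      exact hclose
    obtain ⟨g', h', hg', hh', hbd⟩ := key hK hS0 hg hh hc hclose'
    have hbd' : ∀ k i, |h' k i - g' k i| ≤ 3 * Mg ^ e * δ := by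
      intro k i
      rw [abs_sub_comm]
      calc |g' k i - h' k i| ≤ 3 * Mg ^ e * pnorm ⊤ (Segre g - Segre h) := hbd k i
        _ = 3 * Mg ^ e * δ := by rw [hδ, pnorm_sub_comm]
    have hb0 : 0 ≤ 3 * Mg ^ e * δ := by
      have := Real.rpow_nonneg hMgpos.le e
      positivity
    have h1 := dDist_le hK hS0 p hp hh' hg' hb0 hbd'
    refine le_trans h1 ?_
    have hinner : 3 * Mg ^ e * δ ≤ 7 * min (Mh ^ e) (Mg ^ e) * pnorm q (Segre h - Segre g) := by
      have hm : Mg ^ e ≤ min (Mh ^ e) (Mg ^ e) :=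
        le_min (Real.rpow_le_rpow_of_nonpos hMhpos hc hepos) (le_refl _)
      have s1 : 3 * Mg ^ e ≤ 7 * min (Mh ^ e) (Mg ^ e) :=
        mul_le_mul (by norm_num) hm (Real.rpow_nonneg hMgpos.le _) (by norm_num)
      exact mul_le_mul s1 hδq hδ0 (by positivity)
    calc ((K * S : ℕ) : ℝ) ^ ((1:ℝ)/p.toReal) * (3 * Mg ^ e * δ)
        ≤ ((K * S : ℕ) : ℝ) ^ ((1:ℝ)/p.toReal) *
            (7 * min (Mh ^ e) (Mg ^ e) * pnorm q (Segre h - Segre g)) :=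
          mul_le_mul_of_nonneg_left hinner hKS0
      _ = 7 * ((K * S : ℕ) : ℝ) ^ ((1:ℝ)/p.toReal) * min (Mh ^ e) (Mg ^ e) *
            pnorm q (Segre h - Segre g) := by ring
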